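/- Let μ be a probability measure on a finite set, and for q ∈ [1,2) define Var_q(f) = ‖f‖_2² − ‖f‖_q² for nonnegative f, where ‖f‖_r = (∫ f^r dμ)^{1/r}. Then the map q ↦ Var_q(f)/(1/q − 1/2) is monotone increasing on [1,2). -/

import Mathlib

open Finset in
/-- Hölder interpolation: log-convexity of `p ↦ ∑ w i * f i ^ p`. -/
lemma sum_rpow_interp_aux {ι : Type*} [Fintype ι] (w f : ι → ℝ) (hw : ∀ i, 0 ≤ w i)
    (hf : ∀ i, 0 ≤ f i) {θ a b : ℝ} (hθ0 : 0 < θ) (hθ1 : θ < 1) (ha : 0 < a) (hb : 0 < b) :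
    ∑ i, w i * f i ^ (θ * a + (1 - θ) * b) ≤
      (∑ i, w i * f i ^ a) ^ θ * (∑ i, w i * f i ^ b) ^ (1 - θ) := by
  have h1θ : (0:ℝ) < 1 - θ := by linarith
  have hpq : Real.HolderConjugate (1/θ) (1/(1-θ)) := by
    rw [Real.holderConjugate_iff]; constructor
    · rw [lt_div_iff₀ hθ0]; linarith
    · rw [one_div, one_div, inv_inv, inv_inv]; ring
  have key := Real.inner_le_Lp_mul_Lq_of_nonneg (s := univ)
      (f := fun i => w i ^ θ * f i ^ (θ * a)) (g := fun i => w i ^ (1-θ) * f i ^ ((1-θ) * b))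
      hpq
      (fun i _ => mul_nonneg (Real.rpow_nonneg (hw i) _) (Real.rpow_nonneg (hf i) _))
      (fun i _ => mul_nonneg (Real.rpow_nonneg (hw i) _) (Real.rpow_nonneg (hf i) _))
  have e1 : ∀ i, (w i ^ θ * f i ^ (θ * a)) * (w i ^ (1-θ) * f i ^ ((1-θ) * b))
      = w i * f i ^ (θ * a + (1 - θ) * b) := by
    intro i
    rw [mul_mul_mul_comm, ← Real.rpow_add' (hw i) (by norm_num),
      ← Real.rpow_add' (hf i) (by positivity), add_sub_cancel, Real.rpow_one]
  have e2 : ∀ i, (w i ^ θ * f i ^ (θ * a)) ^ (1/θ) = w i * f i ^ a := by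
    intro i
    rw [Real.mul_rpow (Real.rpow_nonneg (hw i) _) (Real.rpow_nonneg (hf i) _),
      ← Real.rpow_mul (hw i), ← Real.rpow_mul (hf i),
      show θ * (1/θ) = 1 from by field_simp,
      show θ * a * (1/θ) = a from by field_simp, Real.rpow_one]
  have e3 : ∀ i, (w i ^ (1-θ) * f i ^ ((1-θ) * b)) ^ (1/(1-θ)) = w i * f i ^ b := by
    intro i
    rw [Real.mul_rpow (Real.rpow_nonneg (hw i) _) (Real.rpow_nonneg (hf i) _),
      ← Real.rpow_mul (hw i), ← Real.rpow_mul (hf i),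
      show (1-θ) * (1/(1-θ)) = 1 from by field_simp,
      show (1-θ) * b * (1/(1-θ)) = b from by field_simp, Real.rpow_one]
  simp only [e1, e2, e3] at key
  calc ∑ i, w i * f i ^ (θ * a + (1 - θ) * b)
      ≤ (∑ i, w i * f i ^ a) ^ (1/(1/θ)) * (∑ i, w i * f i ^ b) ^ (1/(1/(1-θ))) := key
    _ = _ := by rw [one_div_one_div, one_div_one_div]

theorem stmt8 {ι : Type*} [Fintype ι] (w f : ι → ℝ) (hw : ∀ i, 0 ≤ w i)
    (hw1 : ∑ i, w i = 1) (hf : ∀ i, 0 ≤ f i)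
    (N : ℝ → ℝ) (hN : ∀ r : ℝ, N r = (∑ i, w i * f i ^ r) ^ (1 / r))
    (q q' : ℝ) (hq : 1 ≤ q) (hqq : q ≤ q') (hq' : q' < 2) :
    ((N 2) ^ 2 - (N q) ^ 2) / (1 / q - 1 / 2) ≤
      ((N 2) ^ 2 - (N q') ^ 2) / (1 / q' - 1 / 2) := by
  have hq0 : (0:ℝ) < q := by linarith
  have hq'0 : (0:ℝ) < q' := by linarith
  have hq2 : q < 2 := lt_of_le_of_lt hqq hq'
  set S : ℝ → ℝ := fun r => ∑ i, w i * f i ^ r with hS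
  have hN' : ∀ r : ℝ, N r = S r ^ (1 / r) := hN
  have hSnn : ∀ r, 0 ≤ S r := fun r =>
    Finset.sum_nonneg fun i _ => mul_nonneg (hw i) (Real.rpow_nonneg (hf i) r)
  have hden : (0:ℝ) < 1/q - 1/2 := by
    have : (1:ℝ)/2 < 1/q := by
      apply one_div_lt_one_div_of_lt hq0 hq2
    linarith
  have hden' : (0:ℝ) < 1/q' - 1/2 := by
    have : (1:ℝ)/2 < 1/q' := by
      apply one_div_lt_one_div_of_lt hq'0 hq'
    linarith
  -- degenerate case S 2 = 0
  by_cases hS2 : S 2 = 0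
  · have hall : ∀ i, w i * f i ^ (2:ℝ) = 0 := by
      have hS2' : ∑ i, w i * f i ^ (2:ℝ) = 0 := hS2
      intro i
      exact (Finset.sum_eq_zero_iff_of_nonneg
        (fun i _ => mul_nonneg (hw i) (Real.rpow_nonneg (hf i) 2))).1 hS2' i (Finset.mem_univ i)
    have hzero : ∀ r : ℝ, r ≠ 0 → S r = 0 := by
      intro r hr
      apply Finset.sum_eq_zero
      intro i _
      rcases mul_eq_zero.1 (hall i) with h | h
      · rw [h, zero_mul]
      · have hfi : f i = 0 := by
          by_contra hne
          have : 0 < f i ^ (2:ℝ) :=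
            Real.rpow_pos_of_pos (lt_of_le_of_ne (hf i) (Ne.symm hne)) 2
          linarith [this.trans_eq h]
        rw [hfi, Real.zero_rpow hr, mul_zero]
    have hN0 : ∀ r : ℝ, r ≠ 0 → N r = 0 := by
      intro r hr
      rw [hN' r, hzero r hr, Real.zero_rpow (by simpa using hr)]
    rw [hN0 2 two_ne_zero, hN0 q hq0.ne', hN0 q' hq'0.ne']
    simp
  -- positive case
  have hS2pos : 0 < S 2 := lt_of_le_of_ne (hSnn 2) (Ne.symm hS2)
  obtain ⟨i₀, hi₀⟩ : ∃ i, 0 < w i * f i ^ (2:ℝ) := by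
    by_contra h
    push_neg at h
    have : S 2 ≤ 0 := Finset.sum_nonpos fun i _ => h i
    linarith
  have hwpos : 0 < w i₀ := by
    rcases lt_or_eq_of_le (hw i₀) with h | h
    · exact h
    · rw [← h, zero_mul] at hi₀; exact absurd hi₀ (lt_irrefl 0)
  have hfpos : 0 < f i₀ := by
    rcases lt_or_eq_of_le (hf i₀) with h | h
    · exact h
    · rw [← h, Real.zero_rpow two_ne_zero, mul_zero] at hi₀; exact absurd hi₀ (lt_irrefl 0)
  have hSpos : ∀ r : ℝ, 0 < S r := by
    intro r
    have h1 : 0 < w i₀ * f i₀ ^ r := mul_pos hwpos (Real.rpow_pos_of_pos hfpos r)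
    have h2 : w i₀ * f i₀ ^ r ≤ S r := Finset.single_le_sum
      (fun i _ => mul_nonneg (hw i) (Real.rpow_nonneg (hf i) r)) (Finset.mem_univ i₀)
    linarith
  -- rewrite N r ^ 2 as S r ^ (2 / r)
  have hNsq : ∀ r : ℝ, 0 < r → (N r) ^ 2 = S r ^ ((2:ℝ) / r) := by
    intro r hr
    rw [hN' r, ← Real.rpow_natCast (S r ^ (1/r)) 2, ← Real.rpow_mul (hSnn r),
      show (1/r) * ((2:ℕ):ℝ) = 2/r from by push_cast; ring]
  have hN2 : (N 2) ^ 2 = S 2 := by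
    rw [hNsq 2 two_pos, div_self (two_ne_zero : (2:ℝ) ≠ 0), Real.rpow_one]
  rw [hN2, hNsq q hq0, hNsq q' hq'0]
  set A := S 2 with hA
  set B := S q ^ ((2:ℝ) / q) with hB
  set C := S q' ^ ((2:ℝ) / q') with hC
  rcases eq_or_lt_of_le hqq with rfl | hlt
  · exact le_refl _
  -- main case q < q'
  set lam : ℝ := 2*(q'-q)/(q'*(2-q)) with hlam
  set θ : ℝ := (q'-q)/(2-q) with hθ
  have h2q : (0:ℝ) < 2 - q := by linarith
  have hlam0 : 0 < lam := by
    apply div_pos (by linarith) (by positivity)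
  have hlam1 : lam < 1 := by
    rw [hlam, div_lt_one (by positivity)]
    nlinarith
  have hθ0 : 0 < θ := div_pos (by linarith) h2q
  have hθ1 : θ < 1 := by
    rw [hθ, div_lt_one h2q]; linarith
  have hexp : θ * 2 + (1 - θ) * q = q' := by
    rw [hθ]; field_simp; ring
  have hlamden : lam * (1/q - 1/2) = 1/q - 1/q' := by
    rw [hlam]; field_simp
  -- Hölder interpolation
  have hold : S q' ≤ S 2 ^ θ * S q ^ (1 - θ) := by
    have h := sum_rpow_interp_aux w f hw hf hθ0 hθ1 two_pos hq0 (a := 2) (b := q)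
    rw [hexp] at h
    exact h
  -- raise to power 2/q'
  have hkey : C ≤ A ^ lam * B ^ (1 - lam) := by
    have h1 : C ≤ (S 2 ^ θ * S q ^ (1 - θ)) ^ ((2:ℝ)/q') := by
      rw [hC]
      exact Real.rpow_le_rpow (hSnn q') hold (by positivity)
    have h2 : (S 2 ^ θ * S q ^ (1 - θ)) ^ ((2:ℝ)/q')
        = S 2 ^ (θ * (2/q')) * S q ^ ((1 - θ) * (2/q')) := by
      rw [Real.mul_rpow (Real.rpow_nonneg (hSnn 2) _) (Real.rpow_nonneg (hSnn q) _),
        ← Real.rpow_mul (hSnn 2), ← Real.rpow_mul (hSnn q)]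
    have e1 : θ * ((2:ℝ)/q') = lam := by
      rw [hθ, hlam]; field_simp
    have e2 : (1 - θ) * ((2:ℝ)/q') = (2/q) * (1 - lam) := by
      rw [hθ, hlam]; field_simp; ring
    have h3 : S q ^ ((1 - θ) * ((2:ℝ)/q')) = B ^ (1 - lam) := by
      rw [e2, hB, ← Real.rpow_mul (hSnn q)]
    rw [h2, e1, h3] at h1
    exact h1
  have hAM : A ^ lam * B ^ (1 - lam) ≤ lam * A + (1 - lam) * B :=
    Real.geom_mean_le_arith_mean2_weighted hlam0.le (by linarith) (hSnn 2)
      (Real.rpow_nonneg (hSnn q) _) (by ring)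
  have hCle : C ≤ lam * A + (1 - lam) * B := le_trans hkey hAM
  rw [div_le_div_iff₀ hden hden']
  have hd' : (1 - lam) * (1/q - 1/2) = 1/q' - 1/2 := by
    rw [sub_mul, one_mul, hlamden]; ring
  have h3 : (1 - lam) * (A - B) ≤ A - C := by nlinarith [hCle]
  calc (A - B) * (1/q' - 1/2) = (1 - lam) * (A - B) * (1/q - 1/2) := by
        rw [← hd']; ring
    _ ≤ (A - C) * (1/q - 1/2) := mul_le_mul_of_nonneg_right h3 hden.le
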